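/- Fix n ≥ 1, and let B(j), Λ(j) ∈ M₂(ℝ) for j ∈ {n−1, n, n+1} be such that each commutator [B(j),Λ(j)] = B(j)Λ(j) − Λ(j)B(j) is invertible, and let β(n−1), β(n), β(n+1) be nonzero real numbers. Define M(j) = β(j)[B(j),Λ(j)]J for j ∈ {n−1,n,n+1} (J = [[0,1],[−1,0]]) and C(j+1) = (β(j+1)/β(j))·[B(j+1),Λ(j+1)]·[B(j),Λ(j)]⁻¹ for j ∈ {n−1,n}. Then the five matrices M(n), B(n)M(n), Λ(n)M(n), C(n)M(n), and C(n+1)M(n) are all symmetric. -/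
import Mathlib


open Matrix

noncomputable section

private lemma JJ : (!![0, 1; -1, 0] : Matrix (Fin 2) (Fin 2) ℝ) * !![0, 1; -1, 0] = -1 := by
  ext i j
  fin_cases i <;> fin_cases j <;> simp [Matrix.mul_apply, Fin.sum_univ_two]

private lemma Jinv : (!![0, 1; -1, 0] : Matrix (Fin 2) (Fin 2) ℝ)⁻¹ = -!![0, 1; -1, 0] := by
  apply Matrix.inv_eq_right_inv
  rw [Matrix.mul_neg, JJ]; simp

private lemma tJ (A : Matrix (Fin 2) (Fin 2) ℝ) (h : A.trace = 0) :
    Aᵀ = !![0, 1; -1, 0] * A * !![0, 1; -1, 0] := by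
  rw [Matrix.trace_fin_two] at h
  rw [Matrix.eta_fin_two A]
  ext i j
  fin_cases i <;> fin_cases j <;>
    simp [Matrix.mul_apply, Fin.sum_univ_two] <;> linarith

private lemma symmJ' (A : Matrix (Fin 2) (Fin 2) ℝ)
    (h : Aᵀ = !![0, 1; -1, 0] * A * !![0, 1; -1, 0]) :
    (A * !![0, 1; -1, 0])ᵀ = A * !![0, 1; -1, 0] := by
  have hT : (!![0, 1; -1, 0] : Matrix (Fin 2) (Fin 2) ℝ)ᵀ = -!![0, 1; -1, 0] := by
    ext i j; fin_cases i <;> fin_cases j <;> simp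
  rw [Matrix.transpose_mul, hT, h]
  simp only [Matrix.neg_mul, Matrix.mul_assoc]
  rw [← Matrix.mul_assoc !![0, 1; -1, 0] !![0, 1; -1, 0], JJ]
  simp only [Matrix.neg_mul, neg_neg, Matrix.one_mul]

private lemma symmJ (A : Matrix (Fin 2) (Fin 2) ℝ) (h : A.trace = 0) :
    (A * !![0, 1; -1, 0])ᵀ = A * !![0, 1; -1, 0] :=
  symmJ' A (tJ A h)

private lemma invT (A : Matrix (Fin 2) (Fin 2) ℝ)
    (h : Aᵀ = !![0, 1; -1, 0] * A * !![0, 1; -1, 0]) :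
    (A⁻¹)ᵀ = !![0, 1; -1, 0] * A⁻¹ * !![0, 1; -1, 0] := by
  rw [Matrix.transpose_nonsing_inv, h, Matrix.mul_inv_rev, Matrix.mul_inv_rev, Jinv]
  simp only [Matrix.neg_mul, Matrix.mul_neg, neg_neg, Matrix.mul_assoc]

private lemma conj3 (A B : Matrix (Fin 2) (Fin 2) ℝ)
    (hA : Aᵀ = !![0, 1; -1, 0] * A * !![0, 1; -1, 0])
    (hB : Bᵀ = !![0, 1; -1, 0] * B * !![0, 1; -1, 0]) :
    (A * B * A)ᵀ = !![0, 1; -1, 0] * (A * B * A) * !![0, 1; -1, 0] := by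
  rw [Matrix.transpose_mul, Matrix.transpose_mul, hA, hB]
  simp only [Matrix.mul_assoc]
  rw [← Matrix.mul_assoc !![0, 1; -1, 0] !![0, 1; -1, 0], JJ]
  simp only [Matrix.neg_mul, Matrix.mul_neg, Matrix.one_mul, neg_neg, Matrix.mul_assoc]
  rw [← Matrix.mul_assoc !![0, 1; -1, 0] !![0, 1; -1, 0], JJ]
  simp only [Matrix.neg_mul, Matrix.mul_neg, Matrix.one_mul, neg_neg, Matrix.mul_assoc]

private lemma comm_trace (X Y : Matrix (Fin 2) (Fin 2) ℝ) :
    (X * Y - Y * X).trace = 0 := by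
  simp [Matrix.trace_mul_comm X Y]

private lemma mul_comm_trace (X Y : Matrix (Fin 2) (Fin 2) ℝ) :
    (X * (X * Y - Y * X)).trace = 0 := by
  simp [Matrix.trace_fin_two, Matrix.mul_apply, Fin.sum_univ_two]
  ring

private lemma mul_comm_trace' (X Y : Matrix (Fin 2) (Fin 2) ℝ) :
    (Y * (X * Y - Y * X)).trace = 0 := by
  simp [Matrix.trace_fin_two, Matrix.mul_apply, Fin.sum_univ_two]
  ring

/-- If M(j) = β(j)[B(j),Λ(j)]J and C(j+1) = (β(j+1)/β(j))[B(j+1),Λ(j+1)][B(j),Λ(j)]⁻¹,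
then M(n), B(n)M(n), Λ(n)M(n), C(n)M(n), and C(n+1)M(n) are all symmetric. -/
theorem auto_symmetry
    (n : ℕ) (hn : 1 ≤ n)
    (B Λ M C : ℕ → Matrix (Fin 2) (Fin 2) ℝ) (β : ℕ → ℝ)
    (hinv : ∀ j ∈ ({n - 1, n, n + 1} : Set ℕ), IsUnit (B j * Λ j - Λ j * B j))
    (hβ : ∀ j ∈ ({n - 1, n, n + 1} : Set ℕ), β j ≠ 0)
    (hM : ∀ j ∈ ({n - 1, n, n + 1} : Set ℕ),
      M j = β j • ((B j * Λ j - Λ j * B j) * !![0, 1; -1, 0]))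
    (hC : ∀ j ∈ ({n - 1, n} : Set ℕ),
      C (j + 1) = (β (j + 1) / β j) •
        ((B (j + 1) * Λ (j + 1) - Λ (j + 1) * B (j + 1)) * (B j * Λ j - Λ j * B j)⁻¹)) :
    (M n)ᵀ = M n ∧ (B n * M n)ᵀ = B n * M n ∧ (Λ n * M n)ᵀ = Λ n * M n ∧
      (C n * M n)ᵀ = C n * M n ∧ (C (n + 1) * M n)ᵀ = C (n + 1) * M n := by
  have hMn : M n = β n • ((B n * Λ n - Λ n * B n) * !![0, 1; -1, 0]) := hM n (by simp)
  have hn1 : n - 1 + 1 = n := by omega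
  have hCn : C n = (β n / β (n - 1)) •
      ((B n * Λ n - Λ n * B n) * (B (n - 1) * Λ (n - 1) - Λ (n - 1) * B (n - 1))⁻¹) := by
    have := hC (n - 1) (by simp)
    rwa [hn1] at this
  have hCn1 : C (n + 1) = (β (n + 1) / β n) •
      ((B (n + 1) * Λ (n + 1) - Λ (n + 1) * B (n + 1)) * (B n * Λ n - Λ n * B n)⁻¹) :=
    hC n (by simp)
  have hdet : IsUnit (B n * Λ n - Λ n * B n).det :=
    (Matrix.isUnit_iff_isUnit_det _).mp (hinv n (by simp))
  have hinvK : (B n * Λ n - Λ n * B n)⁻¹ * (B n * Λ n - Λ n * B n) = 1 :=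
    Matrix.nonsing_inv_mul _ hdet
  refine ⟨?_, ?_, ?_, ?_, ?_⟩
  · rw [hMn, Matrix.transpose_smul, symmJ _ (comm_trace _ _)]
  · rw [hMn, mul_smul_comm, ← Matrix.mul_assoc, Matrix.transpose_smul,
      symmJ _ (mul_comm_trace _ _)]
  · rw [hMn, mul_smul_comm, ← Matrix.mul_assoc, Matrix.transpose_smul,
      symmJ _ (mul_comm_trace' _ _)]
  · rw [hMn, hCn, smul_mul_assoc, mul_smul_comm,
      ← Matrix.mul_assoc ((B n * Λ n - Λ n * B n) *
        (B (n - 1) * Λ (n - 1) - Λ (n - 1) * B (n - 1))⁻¹),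
      Matrix.transpose_smul, Matrix.transpose_smul,
      symmJ' _ (conj3 _ _ (tJ _ (comm_trace _ _)) (invT _ (tJ _ (comm_trace _ _))))]
  · rw [hMn, hCn1, smul_mul_assoc, mul_smul_comm,
      Matrix.mul_assoc (B (n + 1) * Λ (n + 1) - Λ (n + 1) * B (n + 1)),
      ← Matrix.mul_assoc ((B n * Λ n - Λ n * B n)⁻¹), hinvK, Matrix.one_mul,
      Matrix.transpose_smul, Matrix.transpose_smul, symmJ _ (comm_trace _ _)]

end
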